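/- Let n = 2 and let Ω ⊆ ℝ² be bounded with d = 2 sup_{y∈Ω} |y|. Then for all x ∈ ℝ² with |x| ≥ d and all y ∈ Ω̄, one has |G(x,y)| ≤ (2d/π)·(1/|x|), where G(x,y) = (1/2π)(log|x−y| − log|ς(x)−y|). -/

import Mathlib

/-- Reflection across the hyperplane `{x_n = 0}` in `ℝⁿ`. -/
noncomputable def reflHyp (n : ℕ) (x : EuclideanSpace ℝ (Fin n)) : EuclideanSpace ℝ (Fin n) :=
  WithLp.toLp 2 (fun (i : Fin n) => if (i : ℕ) = n - 1 then -x i else x i)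

lemma reflHyp_norm (n : ℕ) (x : EuclideanSpace ℝ (Fin n)) : ‖reflHyp n x‖ = ‖x‖ := by
  rw [EuclideanSpace.norm_eq, EuclideanSpace.norm_eq]
  congr 1
  refine Finset.sum_congr rfl fun i _ => ?_
  unfold reflHyp
  show ‖(if (i : ℕ) = n - 1 then -x i else x i)‖ ^ 2 = _
  split <;> simp

lemma log_diff_abs_le (m a b : ℝ) (hm : 0 < m) (hma : m ≤ a) (hmb : m ≤ b) :
    |Real.log a - Real.log b| ≤ |a ^ 2 - b ^ 2| / (2 * m ^ 2) := by
  wlog h : b ≤ a generalizing a b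
  · rw [abs_sub_comm, abs_sub_comm (a ^ 2)]
    exact this b a hmb hma (le_of_not_ge h)
  have hb : 0 < b := lt_of_lt_of_le hm hmb
  have ha : 0 < a := lt_of_lt_of_le hm hma
  have h2 : 0 ≤ Real.log a - Real.log b :=
    sub_nonneg.2 (Real.log_le_log hb h)
  have hsq : 0 ≤ a ^ 2 - b ^ 2 := by nlinarith
  rw [abs_of_nonneg h2, abs_of_nonneg hsq]
  have key : Real.log a - Real.log b ≤ (a - b) / b := by
    rw [← Real.log_div ha.ne' hb.ne']
    calc Real.log (a / b) ≤ a / b - 1 := Real.log_le_sub_one_of_pos (div_pos ha hb)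
      _ = (a - b) / b := by field_simp
  refine key.trans ?_
  rw [div_le_div_iff₀ hb (by positivity)]
  nlinarith [mul_nonneg (sub_nonneg.2 h) (sub_nonneg.2 hmb),
    mul_nonneg (sub_nonneg.2 h) (sub_nonneg.2 hma),
    mul_nonneg (sub_nonneg.2 hma) (sub_nonneg.2 hmb)]

/-- Decay of the half-plane Green's function in dimension 2:
`|G(x,y)| ≤ (2d/π)·(1/|x|)` for `|x| ≥ d = 2 sup_{y∈Ω}|y|` and `y ∈ Ω̄`. -/
theorem greenG_decay_dim_two (Ω : Set (EuclideanSpace ℝ (Fin 2)))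
    (hne : Ω.Nonempty) (hb : Bornology.IsBounded Ω)
    (d : ℝ) (hd : d = 2 * sSup ((fun y : EuclideanSpace ℝ (Fin 2) => ‖y‖) '' Ω))
    (x : EuclideanSpace ℝ (Fin 2)) (hx : d ≤ ‖x‖)
    (y : EuclideanSpace ℝ (Fin 2)) (hy : y ∈ closure Ω) :
    |(1 / (2 * Real.pi)) * (Real.log ‖x - y‖ - Real.log ‖reflHyp 2 x - y‖)| ≤
      (2 * d / Real.pi) * (1 / ‖x‖) := by
  set M : ℝ := sSup ((fun y : EuclideanSpace ℝ (Fin 2) => ‖y‖) '' Ω) with hM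
  -- boundedness of the image
  obtain ⟨C, hC⟩ := hb.exists_norm_le
  have hbdd : BddAbove ((fun y : EuclideanSpace ℝ (Fin 2) => ‖y‖) '' Ω) := by
    refine ⟨C, ?_⟩
    rintro _ ⟨z, hz, rfl⟩
    exact hC z hz
  obtain ⟨y₀, hy₀⟩ := hne
  have hM0 : 0 ≤ M :=
    le_trans (norm_nonneg y₀) (le_csSup hbdd ⟨y₀, hy₀, rfl⟩)
  have hd0 : 0 ≤ d := by rw [hd]; linarith
  -- norm bound on y
  have hyM : ‖y‖ ≤ M := by
    have hsub : closure Ω ⊆ {z : EuclideanSpace ℝ (Fin 2) | ‖z‖ ≤ M} := by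
      refine closure_minimal ?_ (isClosed_le (by continuity) continuous_const)
      intro z hz
      exact le_csSup hbdd ⟨z, hz, rfl⟩
    exact hsub hy
  have hyd : ‖y‖ ≤ d / 2 := by rw [hd]; linarith
  set x' := reflHyp 2 x with hx'
  have hnx' : ‖x'‖ = ‖x‖ := reflHyp_norm 2 x
  rcases eq_or_lt_of_le hd0 with hdz | hdpos
  · -- d = 0 case: y = 0
    have hy0 : y = 0 := by
      have : ‖y‖ ≤ 0 := by linarith
      simpa using le_antisymm this (norm_nonneg y)
    subst hy0
    simp only [sub_zero, hnx', sub_self, mul_zero, abs_zero]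
    rw [← hdz]
    simp
  · -- d > 0
    have hxpos : 0 < ‖x‖ := lt_of_lt_of_le hdpos hx
    set m : ℝ := ‖x‖ / 2 with hm
    have hmpos : 0 < m := by positivity
    have hma : m ≤ ‖x - y‖ := by
      have := norm_sub_norm_le x y
      have h1 : ‖x‖ - ‖y‖ ≤ ‖x - y‖ := by
        calc ‖x‖ - ‖y‖ ≤ |‖x‖ - ‖y‖| := le_abs_self _
          _ ≤ ‖x - y‖ := abs_norm_sub_norm_le x y
      have : ‖y‖ ≤ ‖x‖ / 2 := by linarith
      simp only [hm]; linarith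
    have hmb : m ≤ ‖x' - y‖ := by
      have h1 : ‖x'‖ - ‖y‖ ≤ ‖x' - y‖ := by
        calc ‖x'‖ - ‖y‖ ≤ |‖x'‖ - ‖y‖| := le_abs_self _
          _ ≤ ‖x' - y‖ := abs_norm_sub_norm_le x' y
      rw [hnx'] at h1
      have : ‖y‖ ≤ ‖x‖ / 2 := by linarith
      simp only [hm]; linarith
    -- bound on the difference of squares
    have hsq : ‖x - y‖ ^ 2 - ‖x' - y‖ ^ 2 = 2 * (inner ℝ (x' - x) y : ℝ) := by
      rw [@norm_sub_sq_real (EuclideanSpace ℝ (Fin 2)) _ _ x y,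
        @norm_sub_sq_real (EuclideanSpace ℝ (Fin 2)) _ _ x' y, hnx',
        inner_sub_left]
      ring
    have hinner : |(inner ℝ (x' - x) y : ℝ)| ≤ 2 * ‖x‖ * (d / 2) := by
      calc |(inner ℝ (x' - x) y : ℝ)| ≤ ‖x' - x‖ * ‖y‖ := abs_real_inner_le_norm _ _
        _ ≤ (2 * ‖x‖) * (d / 2) := by
            apply mul_le_mul _ hyd (norm_nonneg y) (by positivity)
            calc ‖x' - x‖ ≤ ‖x'‖ + ‖x‖ := norm_sub_le _ _
              _ = 2 * ‖x‖ := by rw [hnx']; ring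
    have hsqbound : |‖x - y‖ ^ 2 - ‖x' - y‖ ^ 2| ≤ 2 * d * ‖x‖ := by
      rw [hsq, abs_mul]
      calc |(2 : ℝ)| * |(inner ℝ (x' - x) y : ℝ)| = 2 * |(inner ℝ (x' - x) y : ℝ)| := by
            norm_num
        _ ≤ 2 * (2 * ‖x‖ * (d / 2)) := by linarith
        _ = 2 * d * ‖x‖ := by ring
    have hlog : |Real.log ‖x - y‖ - Real.log ‖x' - y‖| ≤ 4 * d / ‖x‖ := by
      calc |Real.log ‖x - y‖ - Real.log ‖x' - y‖|
          ≤ |‖x - y‖ ^ 2 - ‖x' - y‖ ^ 2| / (2 * m ^ 2) :=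
            log_diff_abs_le m _ _ hmpos hma hmb
        _ ≤ (2 * d * ‖x‖) / (2 * m ^ 2) := by
            apply div_le_div_of_nonneg_right hsqbound (by positivity) |>.trans_eq rfl
        _ = 4 * d / ‖x‖ := by
            rw [hm]; field_simp; ring
    have hpi : 0 < Real.pi := Real.pi_pos
    rw [abs_mul, abs_of_nonneg (by positivity : (0:ℝ) ≤ 1 / (2 * Real.pi))]
    calc (1 / (2 * Real.pi)) * |Real.log ‖x - y‖ - Real.log ‖x' - y‖|
        ≤ (1 / (2 * Real.pi)) * (4 * d / ‖x‖) := by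
          apply mul_le_mul_of_nonneg_left hlog (by positivity)
      _ = (2 * d / Real.pi) * (1 / ‖x‖) := by field_simp; ring
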